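/- Let α > 0 and let m, k be real numbers with k ≥ 2 and m > k + 1. Then for every r > 0: −f″(r)/f(r) + (m − 1)·(1 − f′(r)²)/f(r)² − k·f′(r)·G′(r)/(f(r)·G(r)) − f′(r)·h′(r)/(f(r)·h(r)) > 0, where f(r) = r·(1+r²)^(−1/4), G(r) = r/arctan r, and h(r) = (1+r²)^(−α/2). -/

import Mathlib

noncomputable def f (r : ℝ) : ℝ := r * (1 + r ^ 2) ^ (-(1 / 4 : ℝ))

noncomputable def G (r : ℝ) : ℝ := r / Real.arctan r

noncomputable def h (α r : ℝ) : ℝ := (1 + r ^ 2) ^ (-(α / 2))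

lemma arctan_pos' {r : ℝ} (hr : 0 < r) : 0 < Real.arctan r := by
  have := Real.arctan_strictMono hr
  simpa [Real.arctan_zero] using this

lemma arctan_lt_self' {r : ℝ} (hr : 0 < r) : Real.arctan r < r := by
  have := Real.lt_tan (arctan_pos' hr) (Real.arctan_lt_pi_div_two r)
  rwa [Real.tan_arctan] at this

lemma base_hasDeriv (r : ℝ) : HasDerivAt (fun x : ℝ => 1 + x ^ 2) (2 * r) r := by
  simpa using ((hasDerivAt_pow 2 r).const_add 1)

lemma hu_pos (r : ℝ) : (0:ℝ) < 1 + r ^ 2 := by positivity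

lemma f_hasDeriv (r : ℝ) : HasDerivAt f ((1 + r ^ 2) ^ (-(5 / 4 : ℝ)) * (1 + r ^ 2 / 2)) r := by
  have h2 := (base_hasDeriv r).rpow_const (p := -(1/4 : ℝ)) (Or.inl (hu_pos r).ne')
  have h3 := (hasDerivAt_id r).mul h2
  refine h3.congr_deriv ?_
  have e : (1 + r ^ 2 : ℝ) ^ (-(1/4 : ℝ)) = (1 + r^2) ^ (-(5/4 : ℝ)) * (1 + r^2) := by
    rw [show (-(1/4):ℝ) = -(5/4) + 1 by norm_num, Real.rpow_add (hu_pos r), Real.rpow_one]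
  have e2 : (-(1/4:ℝ) - 1) = -(5/4 : ℝ) := by norm_num
  rw [e2] at h3 ⊢
  simp only [id_eq]
  rw [e]; ring

lemma f_deriv_eq : deriv f = fun r => (1 + r ^ 2) ^ (-(5 / 4 : ℝ)) * (1 + r ^ 2 / 2) :=
  funext fun r => (f_hasDeriv r).deriv

lemma f_hasDeriv2 (r : ℝ) :
    HasDerivAt (deriv f) (r * (1 + r ^ 2) ^ (-(9 / 4 : ℝ)) * (-(3/2) - r ^ 2 / 4)) r := by
  rw [f_deriv_eq]
  have h2 := (base_hasDeriv r).rpow_const (p := -(5/4 : ℝ)) (Or.inl (hu_pos r).ne')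
  have h4 : HasDerivAt (fun x : ℝ => 1 + x ^ 2 / 2) r r := by
    simpa using ((hasDerivAt_pow 2 r).div_const 2).const_add 1
  have h3 := h2.mul h4
  refine h3.congr_deriv ?_
  have e : (1 + r ^ 2 : ℝ) ^ (-(5/4 : ℝ)) = (1 + r^2) ^ (-(9/4 : ℝ)) * (1 + r^2) := by
    rw [show (-(5/4):ℝ) = -(9/4) + 1 by norm_num, Real.rpow_add (hu_pos r), Real.rpow_one]
  have e2 : (-(5/4:ℝ) - 1) = -(9/4 : ℝ) := by norm_num
  rw [e2, e]; ring

lemma G_hasDeriv {r : ℝ} (hr : 0 < r) :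
    HasDerivAt G ((Real.arctan r - r * (1 / (1 + r ^ 2))) / Real.arctan r ^ 2) r := by
  have ha : Real.arctan r ≠ 0 := (arctan_pos' hr).ne'
  have := (hasDerivAt_id r).div (Real.hasDerivAt_arctan r) ha
  exact this.congr_deriv (by simp)

lemma h_hasDeriv (α r : ℝ) :
    HasDerivAt (h α) (2 * r * (-(α / 2)) * (1 + r ^ 2) ^ (-(α / 2) - 1)) r := by
  exact (base_hasDeriv r).rpow_const (Or.inl (hu_pos r).ne')

lemma keypoly {s : ℝ} (hs : 1 ≤ s) : 3*s^8 + 2*s^4 - 1 ≤ 4*s^10 := by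
  nlinarith [sq_nonneg (s^2-1), sq_nonneg (s^4-1), sq_nonneg s, sq_nonneg (s-1),
    mul_nonneg (sub_nonneg.2 hs) (sub_nonneg.2 hs)]

set_option maxHeartbeats 1000000 in
/-- Ricci curvature positivity in the `S^m` directions: if `k ≥ 2` and `m > k + 1`, then
`−f″/f + (m−1)(1−(f′)²)/f² − k·f′G′/(fG) − f′h′/(fh) > 0` for all `r > 0`. -/
theorem statement12 (α : ℝ) (hα : 0 < α) (m k : ℝ) (hk : 2 ≤ k) (hm : m > k + 1) :
    ∀ r : ℝ, 0 < r →
      -(deriv (deriv f) r / f r)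
        + (m - 1) * ((1 - (deriv f r) ^ 2) / (f r) ^ 2)
        - k * (deriv f r * deriv G r / (f r * G r))
        - deriv f r * deriv (h α) r / (f r * h α r) > 0 := by
  intro r hr
  have hu : (0:ℝ) < 1 + r ^ 2 := hu_pos r
  set s := (1 + r ^ 2) ^ ((1/4 : ℝ)) with hs_def
  have hs : 0 < s := Real.rpow_pos_of_pos hu _
  have hs1 : 1 ≤ s := by
    have h1 : (1:ℝ) = (1:ℝ) ^ ((1/4:ℝ)) := by rw [Real.one_rpow]
    rw [h1, hs_def]
    exact Real.rpow_le_rpow (by norm_num) (by nlinarith) (by norm_num)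
  have hs4 : s ^ 4 = 1 + r ^ 2 := by
    rw [hs_def, ← Real.rpow_natCast ((1 + r ^ 2) ^ ((1/4:ℝ))) 4, ← Real.rpow_mul hu.le]
    norm_num
  have hs8 : s ^ 8 = (1 + r ^ 2) ^ 2 := by rw [← hs4]; ring
  have ha : 0 < Real.arctan r := arctan_pos' hr
  have e1 : (1 + r ^ 2 : ℝ) ^ (-(1/4 : ℝ)) = s⁻¹ := by
    rw [Real.rpow_neg hu.le]
  have e5 : (1 + r ^ 2 : ℝ) ^ (-(5/4 : ℝ)) = (s ^ 5)⁻¹ := by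
    rw [Real.rpow_neg hu.le]
    congr 1
    rw [hs_def, ← Real.rpow_natCast ((1 + r ^ 2) ^ ((1/4:ℝ))) 5, ← Real.rpow_mul hu.le]
    norm_num
  have e9 : (1 + r ^ 2 : ℝ) ^ (-(9/4 : ℝ)) = (s ^ 9)⁻¹ := by
    rw [Real.rpow_neg hu.le]
    congr 1
    rw [hs_def, ← Real.rpow_natCast ((1 + r ^ 2) ^ ((1/4:ℝ))) 9, ← Real.rpow_mul hu.le]
    norm_num
  have hfr : f r = r / s := by
    rw [show f r = r * (1 + r ^ 2) ^ (-(1 / 4 : ℝ)) from rfl, e1, ← div_eq_mul_inv]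
  have hf' : deriv f r = (1 + r ^ 2 / 2) / s ^ 5 := by
    rw [(f_hasDeriv r).deriv, e5, inv_mul_eq_div]
  have hf'' : deriv (deriv f) r = r * (-(3/2) - r ^ 2 / 4) / s ^ 9 := by
    rw [(f_hasDeriv2 r).deriv, e9]; ring
  have hGr : G r = r / Real.arctan r := rfl
  have hhr : h α r = (1 + r ^ 2) ^ (-(α / 2)) := rfl
  have hH : (0:ℝ) < (1 + r ^ 2) ^ (-(α / 2)) := Real.rpow_pos_of_pos hu _
  -- closed forms of the four terms
  have hT1 : -(deriv (deriv f) r / f r) = (3/2 + r ^ 2 / 4) / s ^ 8 := by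
    rw [hf'', hfr]
    field_simp
    ring
  have hT2 : (1 - (deriv f r) ^ 2) / (f r) ^ 2
      = (s ^ 10 - (1 + r ^ 2 / 2) ^ 2) / (r ^ 2 * s ^ 8) := by
    rw [hf', hfr]
    field_simp
  have hT3 : deriv f r * deriv G r / (f r * G r)
      = (1 + r ^ 2 / 2) * (s ^ 4 * Real.arctan r - r) / (r ^ 2 * s ^ 8 * Real.arctan r) := by
    rw [hf', (G_hasDeriv hr).deriv, hfr, hGr, ← hs4]
    field_simp
  have hT4 : deriv f r * deriv (h α) r / (f r * h α r) = -(α * (1 + r ^ 2 / 2) / s ^ 8) := by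
    rw [hf', (h_hasDeriv α r).deriv, hfr, hhr,
      show (-(α/2) - 1 : ℝ) = -(α/2) + (-1) by ring, Real.rpow_add hu, Real.rpow_neg_one,
      ← hs4]
    have hH' : ((s ^ 4 : ℝ)) ^ (-(α / 2)) ≠ 0 := by
      have : (0:ℝ) < (s ^ 4) ^ (-(α/2)) := Real.rpow_pos_of_pos (by positivity) _
      exact this.ne'
    field_simp
  rw [hT1, hT2, hT3, hT4]
  have hq : (0:ℝ) < 1 + r ^ 2 / 2 := by positivity
  have hk0 : (0:ℝ) < k := by linarith
  -- key1 : the arctan term is bounded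
  have key1 : k * ((1 + r ^ 2 / 2) * (s ^ 4 * Real.arctan r - r) / (r ^ 2 * s ^ 8 * Real.arctan r))
      < k * ((1 + r ^ 2 / 2) / s ^ 8) := by
    apply mul_lt_mul_of_pos_left _ hk0
    rw [div_lt_div_iff₀ (by positivity) (by positivity), hs4, hs8]
    nlinarith [mul_pos (mul_pos hq (sub_pos.2 (arctan_lt_self' hr))) (pow_pos hu 2)]
  -- key2 : lower bound on the (1 - f'^2) term
  have key2 : (1 + r ^ 2 / 2) / s ^ 8 ≤ (s ^ 10 - (1 + r ^ 2 / 2) ^ 2) / (r ^ 2 * s ^ 8) := by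
    rw [div_le_div_iff₀ (by positivity) (by positivity)]
    have hr2e : r ^ 2 = s ^ 4 - 1 := by rw [hs4]; ring
    rw [hr2e]
    have hpoly := keypoly hs1
    nlinarith [mul_nonneg (pow_nonneg hs.le 8)
      (by linarith : (0:ℝ) ≤ 4*s^10 - (3*s^8 + 2*s^4 - 1))]
  have hXpos : (0:ℝ) < (s ^ 10 - (1 + r ^ 2 / 2) ^ 2) / (r ^ 2 * s ^ 8) :=
    lt_of_lt_of_le (by positivity) key2
  have key3 : k * ((1 + r ^ 2 / 2) / s ^ 8)
      < (m - 1) * ((s ^ 10 - (1 + r ^ 2 / 2) ^ 2) / (r ^ 2 * s ^ 8)) := by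
    calc k * ((1 + r ^ 2 / 2) / s ^ 8)
        ≤ k * ((s ^ 10 - (1 + r ^ 2 / 2) ^ 2) / (r ^ 2 * s ^ 8)) :=
          mul_le_mul_of_nonneg_left key2 hk0.le
      _ < (m - 1) * ((s ^ 10 - (1 + r ^ 2 / 2) ^ 2) / (r ^ 2 * s ^ 8)) :=
          mul_lt_mul_of_pos_right (by linarith) hXpos
  have hT1pos : (0:ℝ) < (3/2 + r ^ 2 / 4) / s ^ 8 := by positivity
  have hT4pos : (0:ℝ) < α * (1 + r ^ 2 / 2) / s ^ 8 := by positivity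
  linarith
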